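/- Let X = X₁ ⊕ X₂ be a direct sum of Banach spaces. If the ideal U(X) of unconditionally converging operators on X is complemented in L(X), then U(X₁) is complemented in L(X₁). The same holds with unconditionally converging replaced by weakly compact operators. -/

import Mathlib

open Bornology

/-- `T` is unconditionally converging: it maps weakly unconditionally Cauchy series to
unconditionally convergent series (recall that in a Banach space `Summable` is exactly
unconditional convergence). -/
def UncondConverging {X : Type*} [NormedAddCommGroup X] [NormedSpace ℝ X]
    (T : X →L[ℝ] X) : Prop :=
  ∀ x : ℕ → X, (∀ f : X →L[ℝ] ℝ, Summable fun n => |f (x n)|) →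
    Summable fun n => T (x n)

/-- `T` is weakly compact: it maps bounded sets to relatively weakly compact sets. -/
def WeaklyCompactOp {X : Type*} [NormedAddCommGroup X] [NormedSpace ℝ X]
    (T : X →L[ℝ] X) : Prop :=
  ∀ s : Set X, IsBounded s → IsCompact (closure (toWeakSpace ℝ X '' (T '' s)))

/-- The class `C` of operators on `X` is complemented in `L(X)`: there is a bounded linear
projection of `L(X)` onto the subspace of operators in `C`. -/
def ComplementedClass {X : Type*} [NormedAddCommGroup X] [NormedSpace ℝ X]
    (C : (X →L[ℝ] X) → Prop) : Prop :=
  ∃ P : (X →L[ℝ] X) →L[ℝ] (X →L[ℝ] X),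
    (∀ T, C (P T)) ∧ (∀ T, C T → P T = T)

section Aux


variable {X₁ X₂ : Type*} [NormedAddCommGroup X₁] [NormedSpace ℝ X₁]
  [NormedAddCommGroup X₂] [NormedSpace ℝ X₂]

/-- Extension map `T ↦ inl ∘ T ∘ fst` as a CLM. -/
noncomputable def extOp : (X₁ →L[ℝ] X₁) →L[ℝ] ((X₁ × X₂) →L[ℝ] (X₁ × X₂)) :=
  LinearMap.mkContinuous
    { toFun := fun T => (ContinuousLinearMap.inl ℝ X₁ X₂).comp
        (T.comp (ContinuousLinearMap.fst ℝ X₁ X₂))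
      map_add' := fun T S => by ext x <;> simp
      map_smul' := fun c T => by ext x <;> simp } 1
    (by
      intro T
      rw [one_mul]
      apply ContinuousLinearMap.opNorm_le_bound _ (norm_nonneg T)
      intro x
      show ‖(ContinuousLinearMap.inl ℝ X₁ X₂) (T x.1)‖ ≤ _
      calc ‖(ContinuousLinearMap.inl ℝ X₁ X₂) (T x.1)‖ = ‖T x.1‖ := by
            show ‖(T x.1, (0:X₂))‖ = _
            rw [Prod.norm_def]
            simp
        _ ≤ ‖T‖ * ‖x.1‖ := T.le_opNorm _
        _ ≤ ‖T‖ * ‖x‖ := by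
            exact mul_le_mul_of_nonneg_left (norm_fst_le x) (norm_nonneg T))

/-- Restriction map `S ↦ fst ∘ S ∘ inl` as a CLM. -/
noncomputable def resOp : ((X₁ × X₂) →L[ℝ] (X₁ × X₂)) →L[ℝ] (X₁ →L[ℝ] X₁) :=
  LinearMap.mkContinuous
    { toFun := fun S => (ContinuousLinearMap.fst ℝ X₁ X₂).comp
        (S.comp (ContinuousLinearMap.inl ℝ X₁ X₂))
      map_add' := fun T S => by ext x; simp
      map_smul' := fun c T => by ext x; simp } 1
    (by
      intro S
      rw [one_mul]
      apply ContinuousLinearMap.opNorm_le_bound _ (norm_nonneg S)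
      intro x
      show ‖(S ((ContinuousLinearMap.inl ℝ X₁ X₂) x)).1‖ ≤ _
      calc ‖(S ((ContinuousLinearMap.inl ℝ X₁ X₂) x)).1‖
          ≤ ‖S ((ContinuousLinearMap.inl ℝ X₁ X₂) x)‖ := norm_fst_le _
        _ ≤ ‖S‖ * ‖(ContinuousLinearMap.inl ℝ X₁ X₂) x‖ := S.le_opNorm _
        _ = ‖S‖ * ‖x‖ := by
            congr 1
            show ‖(x, (0:X₂))‖ = _
            rw [Prod.norm_def]
            simp)

@[simp] lemma extOp_apply (T : X₁ →L[ℝ] X₁) (x : X₁ × X₂) :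
    extOp T x = (T x.1, (0 : X₂)) := rfl

@[simp] lemma resOp_apply (S : (X₁ × X₂) →L[ℝ] (X₁ × X₂)) (x : X₁) :
    resOp S x = (S (x, 0)).1 := rfl

lemma resOp_extOp (T : X₁ →L[ℝ] X₁) : resOp (extOp (X₂ := X₂) T) = T := by
  ext x; simp

lemma uc_res {S : (X₁ × X₂) →L[ℝ] (X₁ × X₂)} (hS : UncondConverging S) :
    UncondConverging (resOp S) := by
  intro x hx
  have h : Summable fun n => S (x n, 0) := by
    apply hS
    intro f
    simpa using hx (f.comp (ContinuousLinearMap.inl ℝ X₁ X₂))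
  simpa [Function.comp_def] using h.map (ContinuousLinearMap.fst ℝ X₁ X₂).toLinearMap.toAddMonoidHom
    (ContinuousLinearMap.fst ℝ X₁ X₂).continuous

lemma uc_ext {T : X₁ →L[ℝ] X₁} (hT : UncondConverging T) :
    UncondConverging (extOp (X₂ := X₂) T) := by
  intro x hx
  have h : Summable fun n => T (x n).1 := by
    apply hT
    intro f
    simpa using hx (f.comp (ContinuousLinearMap.fst ℝ X₁ X₂))
  simpa [Function.comp_def] using h.map (ContinuousLinearMap.inl ℝ X₁ X₂).toLinearMap.toAddMonoidHom
    (ContinuousLinearMap.inl ℝ X₁ X₂).continuous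

instance weakT2 {Y : Type*} [NormedAddCommGroup Y] [NormedSpace ℝ Y] :
    T2Space (WeakSpace ℝ Y) :=
  (WeakBilin.isEmbedding (separatingDual_iff_injective.mp inferInstance)).t2Space

lemma weak_image_compact {X Y : Type*} [NormedAddCommGroup X] [NormedSpace ℝ X]
    [NormedAddCommGroup Y] [NormedSpace ℝ Y] (f : X →L[ℝ] Y) {s : Set X}
    (hs : IsCompact (closure (toWeakSpace ℝ X '' s))) :
    IsCompact (closure (toWeakSpace ℝ Y '' (f '' s))) := by
  have hcont : Continuous (WeakSpace.map f) := (WeakSpace.map f).continuous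
  have himg : toWeakSpace ℝ Y '' (f '' s)
      = WeakSpace.map f '' (toWeakSpace ℝ X '' s) := by
    rw [Set.image_image, Set.image_image]
    rfl
  have hsub : closure (toWeakSpace ℝ Y '' (f '' s))
      ⊆ WeakSpace.map f '' closure (toWeakSpace ℝ X '' s) := by
    rw [himg]
    exact closure_minimal (Set.image_mono subset_closure)
      (hs.image hcont).isClosed
  exact (hs.image hcont).of_isClosed_subset isClosed_closure hsub

lemma wc_res {S : (X₁ × X₂) →L[ℝ] (X₁ × X₂)} (hS : WeaklyCompactOp S) :
    WeaklyCompactOp (resOp S) := by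
  intro s hs
  have hb : IsBounded ((ContinuousLinearMap.inl ℝ X₁ X₂) '' s) :=
    (ContinuousLinearMap.inl ℝ X₁ X₂).lipschitz.isBounded_image hs
  have h1 := hS _ hb
  have h2 := weak_image_compact (ContinuousLinearMap.fst ℝ X₁ X₂) h1
  have : (ContinuousLinearMap.fst ℝ X₁ X₂) '' (S '' ((ContinuousLinearMap.inl ℝ X₁ X₂) '' s))
      = (resOp S) '' s := by
    rw [Set.image_image, Set.image_image]
    rfl
  rwa [this] at h2

lemma wc_ext {T : X₁ →L[ℝ] X₁} (hT : WeaklyCompactOp T) :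
    WeaklyCompactOp (extOp (X₂ := X₂) T) := by
  intro s hs
  have hb : IsBounded ((ContinuousLinearMap.fst ℝ X₁ X₂) '' s) :=
    (ContinuousLinearMap.fst ℝ X₁ X₂).lipschitz.isBounded_image hs
  have h1 := hT _ hb
  have h2 := weak_image_compact (ContinuousLinearMap.inl ℝ X₁ X₂) h1
  have : (ContinuousLinearMap.inl ℝ X₁ X₂) '' (T '' ((ContinuousLinearMap.fst ℝ X₁ X₂) '' s))
      = (extOp (X₂ := X₂) T) '' s := by
    rw [Set.image_image, Set.image_image]
    rfl
  rwa [this] at h2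

end Aux

/-- If `X = X₁ ⊕ X₂` and the unconditionally converging operators `U(X)` are complemented
in `L(X)`, then `U(X₁)` is complemented in `L(X₁)`; the same holds for the weakly compact
operators. -/
theorem complemented_ideal_summand
    (X₁ X₂ : Type*) [NormedAddCommGroup X₁] [NormedSpace ℝ X₁] [CompleteSpace X₁]
    [NormedAddCommGroup X₂] [NormedSpace ℝ X₂] [CompleteSpace X₂] :
    (ComplementedClass (fun T : (X₁ × X₂) →L[ℝ] (X₁ × X₂) => UncondConverging T) →
      ComplementedClass (fun T : X₁ →L[ℝ] X₁ => UncondConverging T)) ∧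
    (ComplementedClass (fun T : (X₁ × X₂) →L[ℝ] (X₁ × X₂) => WeaklyCompactOp T) →
      ComplementedClass (fun T : X₁ →L[ℝ] X₁ => WeaklyCompactOp T)) := by
  constructor
  · rintro ⟨P, hP1, hP2⟩
    refine ⟨(resOp).comp (P.comp extOp), fun T => ?_, fun T hT => ?_⟩
    · exact uc_res (hP1 _)
    · simp only [ContinuousLinearMap.comp_apply]
      rw [hP2 _ (uc_ext hT), resOp_extOp]
  · rintro ⟨P, hP1, hP2⟩
    refine ⟨(resOp).comp (P.comp extOp), fun T => ?_, fun T hT => ?_⟩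
    · exact wc_res (hP1 _)
    · simp only [ContinuousLinearMap.comp_apply]
      rw [hP2 _ (wc_ext hT), resOp_extOp]
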